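/- Every permutation of a finite type can be written as the product of two involutions; that is, for every permutation σ of a finite type α there exist permutations τ₁ and τ₂ of α with τ₁ * τ₁ = 1 and τ₂ * τ₂ = 1 such that σ = τ₁ * τ₂. -/

import Mathlib

open Equiv Equiv.Perm

theorem Equiv.Perm.inv_apply_self {α : Type*} (f : Equiv.Perm α) (x : α) : f⁻¹ (f x) = x :=
  f.symm_apply_apply x

theorem Equiv.Perm.apply_inv_self {α : Type*} (f : Equiv.Perm α) (x : α) : f (f⁻¹ x) = x :=
  f.apply_symm_apply x

private lemma zpow_apply_neg_eq {α : Type*} (c : Equiv.Perm α) (a : α) {i j : ℤ}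
    (h : (c ^ i) a = (c ^ j) a) : (c ^ (-i)) a = (c ^ (-j)) a := by
  have h' := congrArg (c ^ (-i - j)) h
  simp only [← Equiv.Perm.mul_apply, ← zpow_add] at h'
  have e1 : -i - j + i = -j := by ring
  have e2 : -i - j + j = -i := by ring
  rw [e1, e2] at h'
  exact h'.symm

private lemma exists_involution_conj {α : Type*} [Fintype α] (σ : Equiv.Perm α) :
    ∃ τ : Equiv.Perm α, τ * τ = 1 ∧ τ * σ * τ = σ⁻¹ ∧ ∀ x, τ x ≠ x → σ x ≠ x := by
  induction σ using Equiv.Perm.cycle_induction_on with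
  | base_one => exact ⟨1, by simp, by simp, by simp⟩
  | base_cycles c hc =>
    obtain ⟨a, ha, hall⟩ := hc
    classical
    set f : α → α := fun y => if h : c.SameCycle a y then (c ^ (-(h.choose))) a else y with hf
    have hfpos : ∀ {y : α} (i : ℤ), (c ^ i) a = y → f y = (c ^ (-i)) a := by
      intro y i hi
      have h : c.SameCycle a y := ⟨i, hi⟩
      simp only [hf, dif_pos h]
      exact zpow_apply_neg_eq c a (h.choose_spec.trans hi.symm)
    have hfneg : ∀ {y : α}, ¬ c.SameCycle a y → f y = y := by
      intro y h; simp only [hf, dif_neg h]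
    have hinv : Function.Involutive f := by
      intro y
      by_cases h : c.SameCycle a y
      · obtain ⟨i, hi⟩ := h
        rw [hfpos i hi, hfpos (-i) rfl, neg_neg, hi]
      · rw [hfneg h, hfneg h]
    refine ⟨hinv.toPerm, ?_, ?_, ?_⟩
    · ext y; simp [Function.Involutive.coe_toPerm, hinv y]
    · ext y
      simp only [Equiv.Perm.mul_apply, Function.Involutive.coe_toPerm,
        Equiv.Perm.inv_apply_self, Equiv.Perm.apply_inv_self]
      by_cases h : c.SameCycle a y
      · obtain ⟨i, hi⟩ := h
        rw [hfpos i hi]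
        have e : (c ^ (1 - i)) a = c ((c ^ (-i)) a) := by
          rw [sub_eq_add_neg, zpow_add, Equiv.Perm.mul_apply, zpow_one]
        rw [← e, hfpos (1 - i) rfl, ← hi, ← Equiv.Perm.mul_apply, ← zpow_neg_one, ← zpow_add]
        congr 1; ring
      · have hcy : c y = y := by
          by_contra hy
          exact h (hall hy)
        rw [hfneg h, hcy, hfneg h]
        conv_rhs => rw [← hcy]
        rw [Equiv.Perm.inv_apply_self]
    · intro y hy
      by_cases h : c.SameCycle a y
      · simp only [Function.Involutive.coe_toPerm] at hy
        exact fun hcy => ha (h.apply_eq_self_iff.2 hcy)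
      · simp only [Function.Involutive.coe_toPerm] at hy
        exact absurd (hfneg h) hy
  | induction_disjoint s t hdisj hs ihs iht =>
    obtain ⟨τs, hτs1, hτs2, hτs3⟩ := ihs
    obtain ⟨τt, hτt1, hτt2, hτt3⟩ := iht
    have hds : ∀ x, s x = x ∨ t x = x := hdisj
    have hd1 : Equiv.Perm.Disjoint τs τt := by
      intro x
      rcases hds x with h | h
      · left; by_contra hx; exact hτs3 x hx h
      · right; by_contra hx; exact hτt3 x hx h
    have hd2 : Equiv.Perm.Disjoint τs t := by
      intro x
      rcases hds x with h | h
      · left; by_contra hx; exact hτs3 x hx h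
      · right; exact h
    have hd3 : Equiv.Perm.Disjoint s τt := by
      intro x
      rcases hds x with h | h
      · left; exact h
      · right; by_contra hx; exact hτt3 x hx h
    have c1 : Commute τs τt := hd1.commute
    have c2 : Commute τs t := hd2.commute
    have c3 : Commute s τt := hd3.commute
    have cst : Commute s t := hdisj.commute
    have hττ : τs * τt * (τs * τt) = 1 := by
      nth_rewrite 2 [c1.eq]
      rw [(by group : τs * τt * (τt * τs) = τs * (τt * τt) * τs), hτt1, mul_one, hτs1]
    have es : τs * τt * s * (τs * τt) = τs * s * τs := by
      have h : τt * s * τt = s := by rw [← c3.eq, mul_assoc, hτt1, mul_one]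
      nth_rewrite 2 [c1.eq]
      rw [(by group : τs * τt * s * (τt * τs) = τs * (τt * s * τt) * τs), h]
    have et : τs * τt * t * (τs * τt) = τt * t * τt := by
      have h : τs * t * τs = t := by rw [c2.eq, mul_assoc, hτs1, mul_one]
      nth_rewrite 1 [c1.eq]
      rw [(by group : τt * τs * t * (τs * τt) = τt * (τs * t * τs) * τt), h]
    have expand : (τs * τt * s * (τs * τt)) * (τs * τt * t * (τs * τt))
        = τs * τt * (s * t) * (τs * τt) := by
      rw [(by group : (τs * τt * s * (τs * τt)) * (τs * τt * t * (τs * τt))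
        = τs * τt * s * ((τs * τt) * (τs * τt)) * (t * (τs * τt))), hττ]
      group
    refine ⟨τs * τt, hττ, ?_, ?_⟩
    · rw [← expand, es, et, hτs2, hτt2, mul_inv_rev, cst.inv_inv.eq]
    · intro x hx
      by_cases ht : τt x = x
      · have hsx : τs x ≠ x := by
          intro h; apply hx; simp [Equiv.Perm.mul_apply, ht, h]
        have hsx' := hτs3 x hsx
        have htx : t x = x := (hds x).resolve_left hsx'
        intro h; apply hsx'
        rw [Equiv.Perm.mul_apply, htx] at h; exact h
      · have htx : t x ≠ x := hτt3 x ht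
        have hsx : s x = x := (hds x).resolve_right htx
        intro h
        rw [Equiv.Perm.mul_apply] at h
        rcases hds (t x) with h' | h'
        · rw [h'] at h; exact htx h
        · exact htx (t.injective h')

theorem perm_eq_prod_two_involutions {α : Type*} [Fintype α] (σ : Equiv.Perm α) :
    ∃ τ₁ τ₂ : Equiv.Perm α, τ₁ * τ₁ = 1 ∧ τ₂ * τ₂ = 1 ∧ σ = τ₁ * τ₂ := by
  obtain ⟨τ, h1, h2, -⟩ := exists_involution_conj σ
  refine ⟨τ, τ * σ, h1, ?_, ?_⟩
  · calc τ * σ * (τ * σ) = (τ * σ * τ) * σ := by group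
      _ = σ⁻¹ * σ := by rw [h2]
      _ = 1 := inv_mul_cancel σ
  · rw [← mul_assoc, h1, one_mul]
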